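/- Let z be a random vector in ℝ^d whose coordinates are independent standard Gaussian random variables, let H be a real symmetric positive semidefinite d×d matrix, and set x = H^{1/2} z, where H^{1/2} is the positive semidefinite square root of H. Then E[‖x‖₂² · x xᵀ] = 2H² + tr(H)·H, and consequently E[‖x‖₂² · x xᵀ] ⪯ 3·tr(H)·H. -/

import Mathlib

open MeasureTheory ProbabilityTheory Matrix Real
open scoped NNReal ENNReal

/-- The square root of a positive semidefinite matrix, as defined in Mathlib (Dec 2024). -/
noncomputable def Matrix.PosSemidef.sqrt {d : ℕ} {H : Matrix (Fin d) (Fin d) ℝ}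
    (hH : H.PosSemidef) : Matrix (Fin d) (Fin d) ℝ :=
  hH.1.eigenvectorUnitary.1 * diagonal ((↑) ∘ (√·) ∘ hH.1.eigenvalues) *
    (star hH.1.eigenvectorUnitary : Matrix (Fin d) (Fin d) ℝ)

lemma Matrix.PosSemidef.sqrt_conjTranspose {d : ℕ} {H : Matrix (Fin d) (Fin d) ℝ}
    (hH : H.PosSemidef) : hH.sqrtᴴ = hH.sqrt := by
  unfold Matrix.PosSemidef.sqrt
  simp only [conjTranspose_mul, diagonal_conjTranspose, star_eq_conjTranspose,
    conjTranspose_conjTranspose, star_trivial, Matrix.mul_assoc]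

lemma Matrix.PosSemidef.sqrt_mul_self {d : ℕ} {H : Matrix (Fin d) (Fin d) ℝ}
    (hH : H.PosSemidef) : hH.sqrt * hH.sqrt = H := by
  have hs := hH.1.spectral_theorem
  rw [Unitary.conjStarAlgAut_apply] at hs
  have hU : (star hH.1.eigenvectorUnitary : Matrix (Fin d) (Fin d) ℝ) *
      hH.1.eigenvectorUnitary.1 = 1 :=
    Unitary.coe_star_mul_self _
  unfold Matrix.PosSemidef.sqrt
  conv_rhs => rw [hs]
  simp only [Matrix.mul_assoc]
  rw [← Matrix.mul_assoc (star _ : Matrix (Fin d) (Fin d) ℝ) _ _, hU, Matrix.one_mul,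
    ← Matrix.mul_assoc (diagonal _), diagonal_mul_diagonal]
  congr 2
  ext i j
  by_cases h : i = j
  · subst h
    simp [Real.mul_self_sqrt (hH.eigenvalues_nonneg i)]
  · simp [h]

noncomputable def gm (n : ℕ) : ℝ := ∫ x, x ^ n ∂(gaussianReal 0 1)

lemma intExp (n : ℕ) : Integrable (fun x : ℝ => x ^ n * Real.exp (-(2⁻¹:ℝ) * x ^ 2)) := by
  have h := integrable_rpow_mul_exp_neg_mul_sq (b := (2⁻¹:ℝ)) (by norm_num) (s := (n:ℝ))
    (by have : (0:ℝ) ≤ n := Nat.cast_nonneg n; linarith)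
  simpa [Real.rpow_natCast] using h

lemma gaussianReal01 : gaussianReal 0 1 = volume.withDensity (gaussianPDF 0 1) :=
  gaussianReal_of_var_ne_zero 0 one_ne_zero

lemma pdfReal01 (x : ℝ) :
    gaussianPDFReal 0 1 x = (Real.sqrt (2*π))⁻¹ * Real.exp (-(2⁻¹:ℝ) * x^2) := by
  unfold gaussianPDFReal
  push_cast
  norm_num
  left
  ring_nf

lemma integrable_pow_gaussianReal (n : ℕ) :
    Integrable (fun x : ℝ => x ^ n) (gaussianReal 0 1) := by
  rw [gaussianReal01, integrable_withDensity_iff (measurable_gaussianPDF 0 1)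
    (ae_of_all _ fun x => ENNReal.ofReal_lt_top)]
  have : (fun x : ℝ => x ^ n * (gaussianPDF 0 1 x).toReal)
      = fun x : ℝ => (Real.sqrt (2*π))⁻¹ * (x ^ n * Real.exp (-(2⁻¹:ℝ) * x^2)) := by
    funext x
    rw [gaussianPDF, ENNReal.toReal_ofReal (gaussianPDFReal_nonneg 0 1 x), pdfReal01]
    ring
  rw [this]
  exact (intExp n).const_mul _

lemma integral_pow_gaussianReal (n : ℕ) :
    gm n = (Real.sqrt (2*π))⁻¹ * ∫ x, x ^ n * Real.exp (-(2⁻¹:ℝ) * x^2) := by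
  rw [gm, gaussianReal01]
  have h : gaussianPDF 0 1 = fun x => ((Real.toNNReal (gaussianPDFReal 0 1 x) : ℝ≥0) : ℝ≥0∞) := rfl
  rw [h, integral_withDensity_eq_integral_smul
    ((measurable_gaussianPDFReal 0 1).real_toNNReal) _]
  have : (fun x : ℝ => Real.toNNReal (gaussianPDFReal 0 1 x) • x ^ n)
      = fun x : ℝ => (Real.sqrt (2*π))⁻¹ * (x ^ n * Real.exp (-(2⁻¹:ℝ) * x^2)) := by
    funext x
    rw [NNReal.smul_def, smul_eq_mul, Real.coe_toNNReal _ (gaussianPDFReal_nonneg 0 1 x), pdfReal01]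
    ring
  rw [this, integral_const_mul]

lemma integral_odd_exp (n : ℕ) (hn : Odd n) :
    ∫ x, x ^ n * Real.exp (-(2⁻¹:ℝ) * x^2) = 0 := by
  have h := integral_neg_eq_self (fun x : ℝ => x ^ n * Real.exp (-(2⁻¹:ℝ) * x^2)) volume
  have h2 : (∫ x : ℝ, (-x) ^ n * Real.exp (-(2⁻¹:ℝ) * (-x)^2))
      = ∫ x : ℝ, -(x ^ n * Real.exp (-(2⁻¹:ℝ) * x^2)) := by
    congr 1; funext x; rw [hn.neg_pow, neg_sq]; ring
  rw [h2, integral_neg] at h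
  linarith

lemma integral_even_exp (n : ℕ) (hn : Even n) :
    ∫ x, x ^ n * Real.exp (-(2⁻¹:ℝ) * x^2)
      = 2 * ((2⁻¹:ℝ) ^ (-((n:ℝ)+1)/2) * (1/2) * Real.Gamma (((n:ℝ)+1)/2)) := by
  have habs : ∀ x : ℝ, |x| ^ n * Real.exp (-(2⁻¹:ℝ) * |x|^2)
      = x ^ n * Real.exp (-(2⁻¹:ℝ) * x^2) := by
    intro x; rw [hn.pow_abs, sq_abs]
  calc ∫ x, x ^ n * Real.exp (-(2⁻¹:ℝ) * x^2)
      = ∫ x : ℝ, |x| ^ n * Real.exp (-(2⁻¹:ℝ) * |x|^2) := by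
        congr 1; funext x; rw [habs]
    _ = 2 * ∫ x in Set.Ioi (0:ℝ), x ^ n * Real.exp (-(2⁻¹:ℝ) * x^2) :=
        integral_comp_abs (f := fun x => x ^ n * Real.exp (-(2⁻¹:ℝ) * x^2))
    _ = 2 * ∫ x in Set.Ioi (0:ℝ), x ^ ((n:ℝ)) * Real.exp (-(2⁻¹:ℝ) * x ^ (2:ℝ)) := by
        congr 1
        refine setIntegral_congr_fun measurableSet_Ioi (fun x _ => ?_)
        rw [Real.rpow_natCast, show (2:ℝ) = ((2:ℕ):ℝ) by norm_num, Real.rpow_natCast]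
    _ = 2 * ((2⁻¹:ℝ) ^ (-((n:ℝ)+1)/2) * (1/2) * Real.Gamma (((n:ℝ)+1)/2)) := by
        rw [integral_rpow_mul_exp_neg_mul_rpow (by norm_num)
          (by have : (0:ℝ) ≤ n := Nat.cast_nonneg n; linarith) (by norm_num)]

lemma gm0 : gm 0 = 1 := by
  simp [gm]

lemma gm1 : gm 1 = 0 := by
  rw [integral_pow_gaussianReal, integral_odd_exp 1 ⟨0, by norm_num⟩, mul_zero]

lemma gm3 : gm 3 = 0 := by
  rw [integral_pow_gaussianReal, integral_odd_exp 3 ⟨1, by norm_num⟩, mul_zero]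

lemma inv_two_rpow_neg (y : ℝ) : (2⁻¹:ℝ) ^ (-y) = 2 ^ y := by
  rw [Real.inv_rpow (by norm_num), ← Real.rpow_neg (by norm_num), neg_neg]

lemma sqrt_pi_ne : Real.sqrt π ≠ 0 := by positivity
lemma sqrt_two_ne : Real.sqrt 2 ≠ 0 := by positivity

lemma two_rpow_three_half : (2:ℝ) ^ ((3:ℝ)/2) = 2 * Real.sqrt 2 := by
  rw [show (3:ℝ)/2 = 1 + 1/2 by norm_num, Real.rpow_add (by norm_num), Real.rpow_one,
    ← Real.sqrt_eq_rpow]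

lemma two_rpow_five_half : (2:ℝ) ^ ((5:ℝ)/2) = 4 * Real.sqrt 2 := by
  rw [show (5:ℝ)/2 = 2 + 1/2 by norm_num, Real.rpow_add (by norm_num),
    ← Real.sqrt_eq_rpow, show (2:ℝ) ^ (2:ℝ) = 4 by
      rw [show (2:ℝ) = ((2:ℕ):ℝ) by norm_num, Real.rpow_natCast]; norm_num]

lemma sqrt_two_pi : Real.sqrt (2*π) = Real.sqrt 2 * Real.sqrt π :=
  Real.sqrt_mul (by norm_num) π

lemma gm2 : gm 2 = 1 := by
  rw [integral_pow_gaussianReal, integral_even_exp 2 ⟨1, by norm_num⟩]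
  have h1 : ((2:ℕ):ℝ) = 2 := by norm_num
  rw [h1, show (-(((2:ℝ))+1)/2) = -((3:ℝ)/2) by norm_num,
    show ((((2:ℝ))+1)/2) = 1/2 + 1 by norm_num,
    Real.Gamma_add_one (by norm_num), Real.Gamma_one_half_eq,
    inv_two_rpow_neg, two_rpow_three_half, sqrt_two_pi]
  field_simp

lemma gm4 : gm 4 = 3 := by
  rw [integral_pow_gaussianReal, integral_even_exp 4 ⟨2, by norm_num⟩]
  have h1 : ((4:ℕ):ℝ) = 4 := by norm_num
  rw [h1, show (-(((4:ℝ))+1)/2) = -((5:ℝ)/2) by norm_num,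
    show ((((4:ℝ))+1)/2) = (3/2) + 1 by norm_num,
    Real.Gamma_add_one (by norm_num), show ((3:ℝ)/2) = 1/2 + 1 by norm_num,
    Real.Gamma_add_one (by norm_num), Real.Gamma_one_half_eq,
    inv_two_rpow_neg, two_rpow_five_half, sqrt_two_pi]
  field_simp
  try ring

lemma pi_moment (d : ℕ) (f : Fin d → ℕ) :
    ∫ z : Fin d → ℝ, ∏ i, (z i) ^ (f i) ∂(Measure.pi fun _ : Fin d => gaussianReal 0 1)
      = ∏ i, gm (f i) := by
  letI : MeasureSpace ℝ := ⟨gaussianReal 0 1⟩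
  haveI : SigmaFinite (volume : Measure ℝ) := by
    change SigmaFinite (gaussianReal 0 1); infer_instance
  exact MeasureTheory.integral_fintype_prod_eq_prod (fun i (x : ℝ) => x ^ (f i))

lemma integrable_monomial (d : ℕ) (f : Fin d → ℕ) :
    Integrable (fun z : Fin d → ℝ => ∏ i, (z i) ^ (f i))
      (Measure.pi fun _ : Fin d => gaussianReal 0 1) := by
  letI : MeasureSpace ℝ := ⟨gaussianReal 0 1⟩
  haveI : SigmaFinite (volume : Measure ℝ) := by
    change SigmaFinite (gaussianReal 0 1); infer_instance
  exact MeasureTheory.Integrable.fintype_prod (f := fun i (x : ℝ) => x ^ (f i))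
    (fun i => integrable_pow_gaussianReal (f i))

def cnt {d : ℕ} (a b c e i : Fin d) : ℕ :=
  (if a = i then 1 else 0) + (if b = i then 1 else 0) + (if c = i then 1 else 0)
    + (if e = i then 1 else 0)

lemma prod_single {d : ℕ} (z : Fin d → ℝ) (a : Fin d) :
    ∏ i, z i ^ (if a = i then 1 else 0) = z a := by
  simp [pow_ite, Finset.prod_ite_eq]

lemma monom_eq {d : ℕ} (a b c e : Fin d) (z : Fin d → ℝ) :
    z a * z b * (z c * z e) = ∏ i, z i ^ cnt a b c e i := by
  simp only [cnt, pow_add, Finset.prod_mul_distrib, prod_single]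
  ring

lemma integrable_mono {d : ℕ} (a b c e : Fin d) :
    Integrable (fun z : Fin d → ℝ => z a * z b * (z c * z e))
      (Measure.pi fun _ : Fin d => gaussianReal 0 1) :=
  (integrable_monomial d (cnt a b c e)).congr
    (Filter.Eventually.of_forall fun z => (monom_eq a b c e z).symm)

lemma wick {d : ℕ} (a b c e : Fin d) :
    ∫ z : Fin d → ℝ, z a * z b * (z c * z e)
        ∂(Measure.pi fun _ : Fin d => gaussianReal 0 1)
      = (if a = b then (1:ℝ) else 0) * (if c = e then 1 else 0)
        + (if a = c then (1:ℝ) else 0) * (if b = e then 1 else 0)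
        + (if a = e then (1:ℝ) else 0) * (if b = c then 1 else 0) := by
  have h : (fun z : Fin d → ℝ => z a * z b * (z c * z e))
      = fun z => ∏ i, z i ^ cnt a b c e i := funext fun z => monom_eq a b c e z
  rw [h, pi_moment]
  by_cases hab : a = b
  · subst hab
    by_cases hce : c = e
    · subst hce
      by_cases hac : a = c
      · subst hac
        rw [Finset.prod_eq_single a (fun t _ ht => by
          have h1 : ¬ a = t := fun h => ht h.symm
          simp [cnt, h1, gm0]) (by simp)]
        norm_num [cnt, gm4]
      · rw [Finset.prod_eq_one (fun t _ => ?_)]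
        · simp [hac]
        · by_cases h1 : a = t
          · have h2 : ¬ c = t := fun h => hac (h1.trans h.symm)
            simp [cnt, h1, h2, gm2]
          · by_cases h2 : c = t
            · simp [cnt, h1, h2, gm2]
            · simp [cnt, h1, h2, gm0]
    · by_cases hac : a = c
      · subst hac
        have h1 : ¬ e = a := fun h => hce h.symm
        rw [Finset.prod_eq_zero (Finset.mem_univ a) (by simp [cnt, h1, gm3])]
        simp [hce]
      · by_cases hae : a = e
        · subst hae
          have h1 : ¬ c = a := fun h => hac h.symm
          rw [Finset.prod_eq_zero (Finset.mem_univ a) (by simp [cnt, h1, gm3])]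
          simp [hce, hac, h1]
        · have h1 : ¬ a = c := hac
          have h2 : ¬ e = c := fun h => hce h.symm
          rw [Finset.prod_eq_zero (Finset.mem_univ c) (by simp [cnt, h1, h2, gm1])]
          simp [hce, hac, hae]
  · have hba : ¬ b = a := fun h => hab h.symm
    by_cases hce : c = e
    · subst hce
      by_cases hac : a = c
      · subst hac
        rw [Finset.prod_eq_zero (Finset.mem_univ b) (by
          have h1 : ¬ a = b := hab
          simp [cnt, h1, gm1])]
        simp [hab, hba]
      · by_cases hbc : b = c
        · subst hbc
          rw [Finset.prod_eq_zero (Finset.mem_univ a) (by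
            simp [cnt, hba, gm1])]
          simp [hab, hac]
        · have hca : ¬ c = a := fun h => hac h.symm
          rw [Finset.prod_eq_zero (Finset.mem_univ a) (by
            simp [cnt, hba, hca, gm1])]
          simp [hab, hac]
    · by_cases hac : a = c
      · subst hac
        by_cases hbe : b = e
        · subst hbe
          rw [Finset.prod_eq_one (fun t _ => ?_)]
          · simp [hab, hba, hce]
          · by_cases h1 : a = t
            · have h2 : ¬ b = t := fun h => hab (h1.trans h.symm)
              simp [cnt, h1, h2, gm2]
            · by_cases h2 : b = t
              · simp [cnt, h1, h2, gm2]
              · simp [cnt, h1, h2, gm0]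
        · have h1 : ¬ a = e := hce
          have h2 : ¬ b = e := hbe
          rw [Finset.prod_eq_zero (Finset.mem_univ e) (by simp [cnt, h1, h2, gm1])]
          simp [hab, hce, hbe]
      · by_cases hae : a = e
        · subst hae
          by_cases hbc : b = c
          · subst hbc
            rw [Finset.prod_eq_one (fun t _ => ?_)]
            · simp [hab, hba, hac]
            · by_cases h1 : a = t
              · have h2 : ¬ b = t := fun h => hab (h1.trans h.symm)
                simp [cnt, h1, h2, gm2]
              · by_cases h2 : b = t
                · simp [cnt, h1, h2, gm2]
                · simp [cnt, h1, h2, gm0]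
          · have h1 : ¬ a = b := hab
            have h2 : ¬ c = b := fun h => hbc h.symm
            rw [Finset.prod_eq_zero (Finset.mem_univ b) (by simp [cnt, h1, h2, gm1])]
            simp [hab, hac, hbc]
        · have h1 : ¬ b = a := hba
          have h2 : ¬ c = a := fun h => hac h.symm
          have h3 : ¬ e = a := fun h => hae h.symm
          rw [Finset.prod_eq_zero (Finset.mem_univ a) (by simp [cnt, h1, h2, h3, gm1])]
          simp [hab, hac, hae]

lemma entry {d : ℕ} (S : Matrix (Fin d) (Fin d) ℝ) (hsym : ∀ p q, S p q = S q p)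
    (i j : Fin d) :
    (∫ z : Fin d → ℝ, (∑ k, (S.mulVec z) k ^ 2) * ((S.mulVec z) i * (S.mulVec z) j)
        ∂(Measure.pi fun _ : Fin d => gaussianReal 0 1))
      = 2 * ((S * S) * (S * S)) i j + (S * S).trace * ((S * S) i j) := by
  have expand : ∀ z : Fin d → ℝ,
      (∑ k, (S.mulVec z) k ^ 2) * ((S.mulVec z) i * (S.mulVec z) j)
        = ∑ k, ∑ a, ∑ b, ∑ c, ∑ e,
            (S k a * S k b * (S i c * S j e)) * (z a * z b * (z c * z e)) := by
    intro z
    simp only [Matrix.mulVec, dotProduct]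
    rw [Finset.sum_mul]
    refine Finset.sum_congr rfl fun k _ => ?_
    rw [pow_two, Finset.sum_mul_sum, Finset.sum_mul]
    refine Finset.sum_congr rfl fun a _ => ?_
    rw [Finset.sum_mul]
    refine Finset.sum_congr rfl fun b _ => ?_
    rw [Finset.sum_mul_sum, Finset.mul_sum]
    refine Finset.sum_congr rfl fun c _ => ?_
    rw [Finset.mul_sum]
    refine Finset.sum_congr rfl fun e _ => ?_
    ring
  have intg : ∀ (k a b c e : Fin d),
      Integrable (fun z : Fin d → ℝ =>
        (S k a * S k b * (S i c * S j e)) * (z a * z b * (z c * z e)))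
        (Measure.pi fun _ : Fin d => gaussianReal 0 1) :=
    fun k a b c e => (integrable_mono a b c e).const_mul _
  have step1 : (∫ z : Fin d → ℝ,
      (∑ k, (S.mulVec z) k ^ 2) * ((S.mulVec z) i * (S.mulVec z) j)
        ∂(Measure.pi fun _ : Fin d => gaussianReal 0 1))
      = ∑ k, ∑ a, ∑ b, ∑ c, ∑ e, (S k a * S k b * (S i c * S j e)) *
          ((if a = b then (1:ℝ) else 0) * (if c = e then 1 else 0)
            + (if a = c then (1:ℝ) else 0) * (if b = e then 1 else 0)
            + (if a = e then (1:ℝ) else 0) * (if b = c then 1 else 0)) := by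
    simp only [expand]
    rw [integral_finset_sum _ (fun k _ => integrable_finset_sum _ (fun a _ =>
      integrable_finset_sum _ (fun b _ => integrable_finset_sum _ (fun c _ =>
      integrable_finset_sum _ (fun e _ => intg k a b c e)))))]
    refine Finset.sum_congr rfl fun k _ => ?_
    rw [integral_finset_sum _ (fun a _ => integrable_finset_sum _ (fun b _ =>
      integrable_finset_sum _ (fun c _ => integrable_finset_sum _ (fun e _ =>
      intg k a b c e))))]
    refine Finset.sum_congr rfl fun a _ => ?_
    rw [integral_finset_sum _ (fun b _ => integrable_finset_sum _ (fun c _ =>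
      integrable_finset_sum _ (fun e _ => intg k a b c e)))]
    refine Finset.sum_congr rfl fun b _ => ?_
    rw [integral_finset_sum _ (fun c _ => integrable_finset_sum _ (fun e _ =>
      intg k a b c e))]
    refine Finset.sum_congr rfl fun c _ => ?_
    rw [integral_finset_sum _ (fun e _ => intg k a b c e)]
    refine Finset.sum_congr rfl fun e _ => ?_
    rw [MeasureTheory.integral_const_mul, wick]
  rw [step1]
  have hT1 : ∑ k, ∑ a, ∑ c : Fin d, S k a * S k a * (S i c * S j c)
      = (S * S).trace * ((S * S) i j) := by
    have perk : ∀ k, ∑ a, ∑ c : Fin d, S k a * S k a * (S i c * S j c)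
        = (∑ a, S k a * S a k) * (∑ c, S i c * S c j) := by
      intro k
      rw [Finset.sum_mul_sum]
      refine Finset.sum_congr rfl fun a _ => Finset.sum_congr rfl fun c _ => ?_
      rw [show S a k = S k a from hsym a k, show S c j = S j c from hsym c j]
    simp_rw [perk, ← Matrix.mul_apply]
    rw [← Finset.sum_mul, Matrix.trace]
    rfl
  have hT2 : ∑ k, ∑ a, ∑ b : Fin d, S k a * S k b * (S i a * S j b)
      = ((S * S) * (S * S)) i j := by
    have perk : ∀ k, ∑ a, ∑ b : Fin d, S k a * S k b * (S i a * S j b)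
        = (∑ a, S i a * S a k) * (∑ b, S k b * S b j) := by
      intro k
      rw [Finset.sum_mul_sum]
      refine Finset.sum_congr rfl fun a _ => Finset.sum_congr rfl fun b _ => ?_
      rw [show S a k = S k a from hsym a k, show S b j = S j b from hsym b j]
      ring
    simp_rw [perk, ← Matrix.mul_apply]
  have hT3 : ∑ k, ∑ a, ∑ b : Fin d, S k a * S k b * (S i b * S j a)
      = ((S * S) * (S * S)) i j := by
    have perk : ∀ k, ∑ a, ∑ b : Fin d, S k a * S k b * (S i b * S j a)
        = (∑ b, S i b * S b k) * (∑ a, S k a * S a j) := by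
      intro k
      rw [Finset.sum_mul_sum, Finset.sum_comm]
      refine Finset.sum_congr rfl fun b _ => Finset.sum_congr rfl fun a _ => ?_
      rw [show S b k = S k b from hsym b k, show S a j = S j a from hsym a j]
      ring
    simp_rw [perk, ← Matrix.mul_apply]
  simp only [mul_add, Finset.sum_add_distrib, mul_ite, ite_mul, mul_one, mul_zero,
    zero_mul, one_mul, Finset.sum_ite_irrel, Finset.sum_const_zero, Finset.sum_ite_eq,
    Finset.sum_ite_eq', Finset.mem_univ, if_true]
  rw [hT1, hT2, hT3]
  ring

set_option maxHeartbeats 1000000 in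
theorem gaussian_fourth_moment_matrix (d : ℕ) (H : Matrix (Fin d) (Fin d) ℝ)
    (hH : H.PosSemidef) :
    (Matrix.of fun i j =>
        ∫ z : Fin d → ℝ,
          (∑ k, (hH.sqrt.mulVec z) k ^ 2) * ((hH.sqrt.mulVec z) i * (hH.sqrt.mulVec z) j)
          ∂(Measure.pi fun _ : Fin d => gaussianReal 0 1))
      = (2 : ℝ) • (H * H) + H.trace • H ∧
    ((3 * H.trace) • H -
        Matrix.of fun i j =>
          ∫ z : Fin d → ℝ,
            (∑ k, (hH.sqrt.mulVec z) k ^ 2) * ((hH.sqrt.mulVec z) i * (hH.sqrt.mulVec z) j)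
            ∂(Measure.pi fun _ : Fin d => gaussianReal 0 1)).PosSemidef := by
  set S : Matrix (Fin d) (Fin d) ℝ := hH.sqrt with hSdef
  have hherm : Sᴴ = S := hH.sqrt_conjTranspose
  have hsym : ∀ p q, S p q = S q p := by
    intro p q
    conv_lhs => rw [← hherm]
    simp [Matrix.conjTranspose_apply]
  have hS2 : S * S = H := hH.sqrt_mul_self
  have h1 : (Matrix.of fun i j =>
        ∫ z : Fin d → ℝ,
          (∑ k, (S.mulVec z) k ^ 2) * ((S.mulVec z) i * (S.mulVec z) j)
          ∂(Measure.pi fun _ : Fin d => gaussianReal 0 1))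
      = (2 : ℝ) • (H * H) + H.trace • H := by
    ext i j
    rw [Matrix.of_apply, entry S hsym i j, hS2]
    simp [Matrix.add_apply, Matrix.smul_apply, smul_eq_mul]
  refine ⟨h1, ?_⟩
  rw [h1]
  have hK : (H.trace • (1 : Matrix (Fin d) (Fin d) ℝ) - H).PosSemidef := by
    refine Matrix.PosSemidef.of_dotProduct_mulVec_nonneg ?_ ?_
    · show _ᴴ = _
      rw [Matrix.conjTranspose_sub, Matrix.conjTranspose_smul, Matrix.conjTranspose_one,
        hH.1.eq, star_trivial]
    · intro x
      have hx : star x = x := by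
        funext t; simp
      rw [hx, Matrix.sub_mulVec, Matrix.smul_mulVec, Matrix.one_mulVec,
        dotProduct_sub, dotProduct_smul]
      have hHx : x ⬝ᵥ (H *ᵥ x) = (S *ᵥ x) ⬝ᵥ (S *ᵥ x) := by
        have h0 : x ⬝ᵥ ((S * S) *ᵥ x) = (S *ᵥ x) ⬝ᵥ (S *ᵥ x) := by
          rw [← Matrix.mulVec_mulVec, Matrix.dotProduct_mulVec]
          congr 1
          funext p
          simp only [Matrix.vecMul, Matrix.mulVec, dotProduct]
          exact Finset.sum_congr rfl fun q _ => by rw [hsym q p]; ring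
        rw [hS2] at h0
        exact h0
      rw [hHx]
      have htr : H.trace = ∑ k, ∑ c, S k c * S k c := by
        have h0 : (S * S).trace = ∑ k, ∑ c, S k c * S k c := by
          rw [Matrix.trace]
          refine Finset.sum_congr rfl fun k _ => ?_
          rw [Matrix.diag, Matrix.mul_apply]
          exact Finset.sum_congr rfl fun c _ => by rw [hsym c k]
        rw [hS2] at h0
        exact h0
      have hcs : ∀ k, ((S *ᵥ x) k) * ((S *ᵥ x) k)
          ≤ (∑ c, S k c * S k c) * (∑ c, x c * x c) := by
        intro k
        have h := Finset.sum_mul_sq_le_sq_mul_sq Finset.univ (fun c => S k c) x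
        simp only [pow_two] at h
        simpa [Matrix.mulVec, dotProduct] using h
      have hsum : (S *ᵥ x) ⬝ᵥ (S *ᵥ x) ≤ H.trace * (x ⬝ᵥ x) := by
        rw [htr, dotProduct, Finset.sum_mul]
        exact Finset.sum_le_sum fun k _ => hcs k
      have hxx : x ⬝ᵥ x = ∑ c, x c * x c := rfl
      rw [smul_eq_mul]
      linarith
  have hmid : S * (H.trace • (1 : Matrix (Fin d) (Fin d) ℝ) - H) * S
      = H.trace • H - H * H := by
    have h0 : S * (H.trace • (1 : Matrix (Fin d) (Fin d) ℝ) - H) * S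
        = H.trace • (S * S) - S * H * S := by
      rw [Matrix.mul_sub, Matrix.sub_mul]
      congr 1
      rw [Matrix.mul_smul, Matrix.mul_one, Matrix.smul_mul]
    have h2 : S * H * S = H * H := by
      conv_lhs => rw [← hS2]
      rw [← Matrix.mul_assoc, Matrix.mul_assoc, hS2]
    rw [h0, h2, hS2]
  have hM : ((3 * H.trace) • H - ((2:ℝ) • (H * H) + H.trace • H))
      = (2:ℝ) • (S * (H.trace • (1 : Matrix (Fin d) (Fin d) ℝ) - H) * S) := by
    rw [hmid]
    ext i j
    simp only [Matrix.sub_apply, Matrix.add_apply, Matrix.smul_apply, smul_eq_mul]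
    ring
  rw [hM]
  have hpsd : (S * (H.trace • (1 : Matrix (Fin d) (Fin d) ℝ) - H) * S).PosSemidef := by
    have h := hK.mul_mul_conjTranspose_same S
    rwa [hherm] at h
  refine Matrix.PosSemidef.of_dotProduct_mulVec_nonneg ?_ ?_
  · show _ᴴ = _
    rw [Matrix.conjTranspose_smul, hpsd.1.eq, star_trivial]
  · intro x
    rw [Matrix.smul_mulVec, dotProduct_smul, smul_eq_mul]
    exact mul_nonneg (by norm_num) (hpsd.dotProduct_mulVec_nonneg x)
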